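/- The map f : A → B defined by the sign-eliminating algorithm is well-defined: for every input ((w_1,…,w_n), i) ∈ A, the output (w̃_1,…,w̃_n) satisfies (1) each w̃_l uses only letters from {l,…,n}, (2) the lengths |w̃_1|,…,|w̃_n| are a permutation of {0,…,n−1}, and (3) there is a unique deficit letter b_1 ∈ {j,…,n}, i.e., #_l(w̃_1⋯w̃_n) = d_l − 1[l=b_1] for all l ∈ [n]. -/

import Mathlib

open Finset

noncomputable section

/-- One step of the sign-eliminating algorithm, processing the word with index
`idx t` (0-indexed step `t`, corresponding to paper step `t+1`).  The state is a
pair (current words, buffer).  `b t` is the `t`-th removed suffix letter of `w_j`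
(paper `b_{t+1}`). -/
def stepF (n : ℕ) (j k : Fin n) (b : ℕ → Fin n) (idx : ℕ → Fin n) (t : ℕ)
    (st : (Fin n → List (Fin n)) × List (Fin n)) :
    (Fin n → List (Fin n)) × List (Fin n) :=
  let l := idx t
  if j < l then (st.1, b t :: st.2)                        -- tail: word unchanged
  else if k < l then                                       -- exchange
    (Function.update st.1 l ((st.1 l).dropLast ++ [b t]), (st.1 l).getLastD (b t) :: st.2)
  else                                                     -- receiver
    (Function.update st.1 l (st.1 l ++ st.2), [b t])

/-- State after processing the `s` largest steps `m−1, m−2, …, m−s` (0-indexed),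
starting from buffer `[k]`. -/
def run (n : ℕ) (j k : Fin n) (b : ℕ → Fin n) (idx : ℕ → Fin n) (m : ℕ)
    (init : Fin n → List (Fin n)) : ℕ → (Fin n → List (Fin n)) × List (Fin n)
  | 0 => (init, [k])
  | s + 1 => stepF n j k b idx (m - 1 - s) (run n j k b idx m init s)

/-- The output of the sign-eliminating algorithm (Algorithm 1) on input
`((w_1,…,w_n), i)` with deficit letter `k`.  Here `L = |w_i|`, `U = |w_j|`,
`m = U − L`, `w_j` is truncated to its first `L` letters, `b` lists the removed
letters, and `idx t` is the unique index with `|w_{idx t}| = L + t`. -/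
def algOut (n : ℕ) (j k i : Fin n) (w : Fin n → List (Fin n)) : Fin n → List (Fin n) :=
  let L := (w i).length
  let U := (w j).length
  let m := U - L
  let b : ℕ → Fin n := fun t => ((w j).drop L).getD t k
  let idx : ℕ → Fin n := fun t =>
    @Function.invFun (Fin n) ℕ ⟨j⟩ (fun l => (w l).length) (L + t)
  (run n j k b idx m (Function.update w j ((w j).take L)) m).1

/-- Membership of `((w, i), k)` in `A` (with `k` the deficit letter):
`i ∈ [j−1]`, alphabet constraints, lengths a permutation of `{0,…,n−1}`,
`|w_i| < |w_j|`, and `k ∈ [i, j−1]` with `#_l(w_1⋯w_n) = d_l − 1[l=k]`. -/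
def memA (n : ℕ) (j : Fin n) (d : Fin n → ℕ) (w : Fin n → List (Fin n))
    (i k : Fin n) : Prop :=
  i < j ∧
  (∀ l : Fin n, ∀ a ∈ w l, l ≤ a) ∧
  (∃ σ : Equiv.Perm (Fin n), ∀ l, (w l).length = (σ l : ℕ)) ∧
  (w i).length < (w j).length ∧
  i ≤ k ∧ k < j ∧
  (∀ l : Fin n, (∑ m, (w m).count l) + (if l = k then 1 else 0) = d l)

theorem map_update_univ {α : Type*} [Fintype α] [DecidableEq α] (f : α → ℕ) (l : α) (x : ℕ) :
    Multiset.map (Function.update f l x) Finset.univ.val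
      = x ::ₘ (Multiset.map f Finset.univ.val).erase (f l) := by
  have hnd : l ∉ Finset.univ.val.erase l := (Finset.univ.nodup).notMem_erase
  have h1 : (Finset.univ.val : Multiset α) = l ::ₘ Finset.univ.val.erase l :=
    (Multiset.cons_erase (Finset.mem_univ l)).symm
  rw [h1, Multiset.map_cons, Multiset.map_cons, Function.update_self, Multiset.erase_cons_head]
  congr 1
  exact Multiset.map_congr rfl (fun y hy => Function.update_of_ne (by rintro rfl; exact hnd hy) _ _)

theorem comp_update' {α β : Type*} [DecidableEq α] (g : β → ℕ) (f : α → β) (l : α) (x : β) :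
    (fun y => g (Function.update f l x y)) = Function.update (fun y => g (f y)) l (g x) := by
  funext y
  by_cases h : y = l
  · subst h; simp
  · simp [Function.update_of_ne h]

theorem map_len_update {n : ℕ} (W : Fin n → List (Fin n)) (l : Fin n) (nw : List (Fin n)) :
    Multiset.map (fun y => ((Function.update W l nw) y).length) Finset.univ.val
      = nw.length ::ₘ (Multiset.map (fun y => (W y).length) Finset.univ.val).erase ((W l).length) := by
  have h : (fun y => ((Function.update W l nw) y).length)
      = Function.update (fun y => (W y).length) l nw.length := comp_update' _ _ _ _
  rw [h, map_update_univ]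

theorem sum_count_update {n : ℕ} (W : Fin n → List (Fin n)) (l : Fin n) (nw : List (Fin n))
    (a : Fin n) :
    (∑ x, ((Function.update W l nw) x).count a)
      = nw.count a + ∑ x ∈ Finset.univ.erase l, (W x).count a := by
  have h : ∀ x : Fin n, ((Function.update W l nw) x).count a
      = (Function.update (fun x => (W x).count a) l (nw.count a)) x := by
    intro x
    by_cases hx : x = l
    · subst hx; simp
    · simp [Function.update_of_ne hx]
  rw [Finset.sum_congr rfl (fun x _ => h x), Finset.sum_update_of_mem (Finset.mem_univ l),
    ← Finset.erase_eq]

def SEInv (n : ℕ) (j k : Fin n) (d : Fin n → ℕ) (w : Fin n → List (Fin n))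
    (L m s : ℕ) (St : (Fin n → List (Fin n)) × List (Fin n)) : Prop :=
  (∀ l : Fin n, (w l).length < L + (m - s) ∨ L + m ≤ (w l).length →
      St.1 l = Function.update w j ((w j).take L) l) ∧
  (∀ a ∈ St.2, k ≤ a) ∧
  (∀ l : Fin n, ∀ a ∈ St.1 l, l ≤ a) ∧
  1 ≤ St.2.length ∧
  L + (m - s) + St.2.length - 1 < n ∧
  Multiset.map (fun l => (St.1 l).length) Finset.univ.val
    = L ::ₘ (Multiset.range n).erase (L + (m - s) + St.2.length - 1) ∧
  (∀ a : Fin n, (∑ x, (St.1 x).count a) + St.2.count a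
      + (((w j).drop L).take (m - s)).count a = d a)

theorem inv_step (n : ℕ) (j k i : Fin n) (d : Fin n → ℕ) (w : Fin n → List (Fin n))
    (L m : ℕ) (b idx : ℕ → Fin n)
    (hinj : ∀ l₁ l₂ : Fin n, (w l₁).length = (w l₂).length → l₁ = l₂)
    (halpha : ∀ l : Fin n, ∀ a ∈ w l, l ≤ a)
    (hiL : (w i).length = L) (hik : i ≤ k) (hkj : k < j)
    (hU : (w j).length = L + m) (hUn : L + m < n)
    (hb : ∀ t, t < m → b t = ((w j).drop L).getD t k)
    (hidx : ∀ t, t < m → (w (idx t)).length = L + t)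
    (s : ℕ) (hs : s < m) (St : (Fin n → List (Fin n)) × List (Fin n))
    (H : SEInv n j k d w L m s St) :
    SEInv n j k d w L m (s+1) (stepF n j k b idx (m - 1 - s) St) := by
  obtain ⟨HA, HB, HC, Hv, Hhn, HM, HE⟩ := H
  set t := m - 1 - s with htdef
  have ht : t < m := by omega
  have hms : m - s = t + 1 := by omega
  have hms1 : m - (s + 1) = t := by omega
  set l : Fin n := idx t with hldef
  have hl : (w l).length = L + t := hidx t ht
  have hlj : l ≠ j := by intro e; rw [e, hU] at hl; omega
  have hWl : St.1 l = w l := by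
    rw [HA l (Or.inl (by omega)), Function.update_of_ne hlj]
  have hdlen : ((w j).drop L).length = m := by rw [List.length_drop, hU]; omega
  have hbt : ((w j).drop L)[t]? = some (b t) := by
    rw [List.getElem?_eq_getElem (by omega), hb t ht]
    simp [List.getD_eq_getElem?_getD, List.getElem?_eq_getElem (show t < ((w j).drop L).length by omega)]
  have hbmem : b t ∈ w j := by
    have : b t ∈ (w j).drop L := by
      have := List.mem_of_getElem? hbt
      exact this
    exact List.mem_of_mem_drop this
  have hjb : j ≤ b t := halpha j _ hbmem
  have hkb : k ≤ b t := le_trans (le_of_lt hkj) hjb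
  have hcount_take : ∀ a : Fin n, (((w j).drop L).take (t+1)).count a
      = (((w j).drop L).take t).count a + if b t = a then 1 else 0 := by
    intro a
    rw [List.take_succ, hbt]
    simp only [Option.toList_some, List.count_append, List.count_cons, List.count_nil, beq_iff_eq]
    rcases eq_or_ne (b t) a with h | h
    · simp [h]
    · simp [h, Ne.symm h]
  -- unprocessed condition transfer
  have hA' : ∀ l' : Fin n, ((w l').length < L + t ∨ L + m ≤ (w l').length) →
      (w l').length < L + (m - s) ∨ L + m ≤ (w l').length := by
    intro l' h'; rcases h' with h' | h'
    · exact Or.inl (by omega)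
    · exact Or.inr h'
  have hne_l : ∀ l' : Fin n, ((w l').length < L + t ∨ L + m ≤ (w l').length) → l' ≠ l := by
    intro l' h' e
    rw [e, hl] at h'; omega
  unfold SEInv
  simp only [stepF]
  rw [← hldef]
  split_ifs with h1 h2
  all_goals dsimp only
  · -- tail
    refine ⟨?_, ?_, ?_, ?_, ?_, ?_, ?_⟩
    · intro l' h'; rw [hms1] at h'; exact HA l' (hA' l' h')
    · intro a ha
      rcases List.mem_cons.mp ha with rfl | ha
      · exact hkb
      · exact HB a ha
    · exact HC
    · simp only [List.length_cons]; omega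
    · simp only [List.length_cons, hms1]
      rw [hms] at Hhn; omega
    · simp only [List.length_cons, hms1]
      have e2 : L + t + (St.2.length + 1) - 1 = L + (t + 1) + St.2.length - 1 := by omega
      rw [e2, ← hms]; exact HM
    · intro a
      have h0 := HE a
      rw [hms, hcount_take a] at h0
      simp only [List.count_cons, beq_iff_eq, hms1]
      have : (if a = b t then 1 else 0) = (if b t = a then 1 else 0) := by
        simp [eq_comm]
      omega
  · -- exchange
    have hlltj : l < j := lt_of_le_of_ne (not_lt.mp h1) hlj
    have hnil : w l ≠ [] := by
      intro e
      have h0 : (w l).length = 0 := by rw [e]; rfl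
      have hL0 : L = 0 ∧ t = 0 := by omega
      have : l = i := hinj l i (by rw [hl, hiL]; omega)
      rw [this] at h2
      exact absurd hik (not_le.mpr h2)
    have hlastD : (St.1 l).getLastD (b t) = (w l).getLast hnil := by
      rw [hWl, List.getLastD_eq_getLast?, List.getLast?_eq_getLast hnil]; rfl
    have hlast_mem : (w l).getLast hnil ∈ w l := List.getLast_mem hnil
    have hsplit : (w l).dropLast ++ [(w l).getLast hnil] = w l := List.dropLast_append_getLast hnil
    refine ⟨?_, ?_, ?_, ?_, ?_, ?_, ?_⟩
    · intro l' h'; rw [hms1] at h'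
      rw [Function.update_of_ne (hne_l l' h')]
      exact HA l' (hA' l' h')
    · intro a ha
      rcases List.mem_cons.mp ha with rfl | ha
      · rw [hlastD]; exact le_trans (le_of_lt h2) (halpha l _ hlast_mem)
      · exact HB a ha
    · intro l' a ha
      by_cases e : l' = l
      · rw [e] at ha ⊢
        rw [Function.update_self, hWl] at ha
        rcases List.mem_append.mp ha with ha | ha
        · exact halpha l a (List.mem_of_mem_dropLast ha)
        · rcases List.mem_singleton.mp ha with rfl
          exact le_trans (le_of_lt hlltj) hjb
      · rw [Function.update_of_ne e] at ha
        exact HC l' a ha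
    · simp only [List.length_cons]; omega
    · simp only [List.length_cons, hms1]
      rw [hms] at Hhn; omega
    · simp only [List.length_cons, hms1]
      rw [map_len_update]
      have hlen1 : 1 ≤ (w l).length := List.length_pos_iff.mpr hnil
      have hlen_nw : ((St.1 l).dropLast ++ [b t]).length = L + t := by
        rw [hWl]
        simp only [List.length_append, List.length_dropLast, List.length_cons, List.length_nil]
        omega
      have hlen_old : (St.1 l).length = L + t := by rw [hWl, hl]
      rw [hlen_nw, hlen_old]
      have hmem : (L + t : ℕ) ∈ Multiset.map (fun l' => (St.1 l').length) Finset.univ.val := by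
        rw [← hlen_old]
        exact Multiset.mem_map_of_mem _ (Finset.mem_univ l)
      rw [Multiset.cons_erase hmem, HM, hms]
      have e2 : L + t + (St.2.length + 1) - 1 = L + (t + 1) + St.2.length - 1 := by omega
      rw [e2]
    · intro a
      have h0 := HE a
      rw [hms, hcount_take a] at h0
      rw [sum_count_update]
      rw [← Finset.add_sum_erase _ _ (Finset.mem_univ l)] at h0
      simp only [List.count_cons, List.count_append, List.count_nil, beq_iff_eq, hms1]
      have hcnt : (St.1 l).count a = ((St.1 l).dropLast).count a
          + (if (w l).getLast hnil = a then 1 else 0) := by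
        conv_lhs => rw [hWl, ← hsplit]
        rw [hWl]
        simp only [List.count_append, List.count_cons, List.count_nil, beq_iff_eq, zero_add]
      rw [hlastD]
      have e3 : (if a = b t then 1 else 0) = (if b t = a then 1 else 0) := by simp [eq_comm]
      have e3' : (if a = (w l).getLast hnil then 1 else 0)
          = (if (w l).getLast hnil = a then 1 else 0) := by simp [eq_comm]
      omega
  · -- receiver
    have hlk : l ≤ k := not_lt.mp h2
    refine ⟨?_, ?_, ?_, ?_, ?_, ?_, ?_⟩
    · intro l' h'; rw [hms1] at h'
      rw [Function.update_of_ne (hne_l l' h')]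
      exact HA l' (hA' l' h')
    · intro a ha
      rcases List.mem_singleton.mp ha with rfl
      exact hkb
    · intro l' a ha
      by_cases e : l' = l
      · rw [e] at ha ⊢
        rw [Function.update_self] at ha
        rcases List.mem_append.mp ha with ha | ha
        · exact HC l a ha
        · exact le_trans hlk (HB a ha)
      · rw [Function.update_of_ne e] at ha
        exact HC l' a ha
    · simp only [List.length_cons, List.length_nil]; omega
    · simp only [List.length_cons, List.length_nil, hms1]
      omega
    · simp only [List.length_cons, List.length_nil, hms1, Nat.zero_add]
      rw [map_len_update]
      have hlen_old : (St.1 l).length = L + t := by rw [hWl, hl]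
      have hlen_nw : (St.1 l ++ St.2).length = L + t + St.2.length := by
        rw [List.length_append, hlen_old]
      rw [hlen_nw, hlen_old, HM]
      rw [hms] at Hhn ⊢
      have hhold : L + (t + 1) + St.2.length - 1 = L + t + St.2.length := by omega
      rw [hhold] at Hhn ⊢
      have hAn : L + t + St.2.length < n := Hhn
      have hBn : L + t < n := by omega
      have e4 : L + t + 1 - 1 = L + t := by omega
      rw [e4]
      rcases Nat.eq_zero_or_pos t with e5 | e5
      · have h6 : (L + t : ℕ) = L := by omega
        rw [h6, Multiset.erase_cons_head,
          Multiset.cons_erase (Multiset.mem_range.mpr (show L + St.2.length < n by omega)),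
          Multiset.cons_erase (Multiset.mem_range.mpr (show L < n by omega))]
      · rw [Multiset.erase_cons_tail _ (show (L : ℕ) ≠ L + t by omega)]
        rw [Multiset.erase_comm]
        rw [Multiset.cons_swap]
        congr 1
        refine Multiset.cons_erase ?_
        rw [Multiset.mem_erase_of_ne (show (L + t + St.2.length : ℕ) ≠ L + t by omega)]
        exact Multiset.mem_range.mpr hAn
    · intro a
      have h0 := HE a
      rw [hms, hcount_take a] at h0
      rw [sum_count_update]
      rw [← Finset.add_sum_erase _ _ (Finset.mem_univ l)] at h0
      simp only [List.count_cons, List.count_append, List.count_nil, beq_iff_eq, hms1]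
      have e3 : (if a = b t then 1 else 0) = (if b t = a then 1 else 0) := by simp [eq_comm]
      omega

theorem fin_val_univ (n : ℕ) :
    Multiset.map (Fin.val (n := n)) (Finset.univ.val) = Multiset.range n := by
  rw [Fin.univ_val_map]; simp [List.ofFn_eq_map, ← List.range_eq_range']
  rfl

theorem inv_init (n : ℕ) (j k : Fin n) (d : Fin n → ℕ) (w : Fin n → List (Fin n))
    (L m : ℕ)
    (halpha : ∀ l : Fin n, ∀ a ∈ w l, l ≤ a)
    (hU : (w j).length = L + m) (hUn : L + m < n)
    (hσ : ∃ σ : Equiv.Perm (Fin n), ∀ l, (w l).length = (σ l : ℕ))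
    (hcount : ∀ a : Fin n, (∑ x, (w x).count a) + (if a = k then 1 else 0) = d a) :
    SEInv n j k d w L m 0 (Function.update w j ((w j).take L), [k]) := by
  obtain ⟨σ, hσ⟩ := hσ
  have htakelen : ((w j).take L).length = L := by
    rw [List.length_take]; omega
  unfold SEInv
  dsimp only
  refine ⟨?_, ?_, ?_, ?_, ?_, ?_, ?_⟩
  · intro l _; rfl
  · intro a ha; rcases List.mem_singleton.mp ha with rfl; exact le_rfl
  · intro l a ha
    by_cases e : l = j
    · rw [e] at ha ⊢
      rw [Function.update_self] at ha
      exact halpha j a (List.mem_of_mem_take ha)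
    · rw [Function.update_of_ne e] at ha; exact halpha l a ha
  · simp
  · simp only [List.length_singleton]
    omega
  · have hmap : Multiset.map (fun l => (w l).length) Finset.univ.val = Multiset.range n := by
      have h1 : (fun l : Fin n => (w l).length) = fun l => ((σ l : ℕ)) := funext hσ
      rw [h1]
      have h2 : Multiset.map (fun l : Fin n => ((σ l : ℕ))) Finset.univ.val
          = Multiset.map Fin.val (Multiset.map σ Finset.univ.val) := by
        rw [Multiset.map_map]; rfl
      rw [h2, Multiset.map_univ_val_equiv σ, fin_val_univ]
    have e1 : (fun l => ((Function.update w j ((w j).take L)) l).length)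
        = Function.update (fun l => (w l).length) j ((w j).take L).length :=
      comp_update' _ _ _ _
    rw [e1, map_update_univ, hmap, htakelen, hU]
    simp only [List.length_singleton]
    have e2 : L + (m - 0) + 1 - 1 = L + m := by omega
    rw [e2]
  · intro a
    rw [sum_count_update]
    have h0 := hcount a
    rw [← Finset.add_sum_erase _ _ (Finset.mem_univ j)] at h0
    have hwj : (w j).count a = ((w j).take L).count a + ((w j).drop L).count a := by
      conv_lhs => rw [← List.take_append_drop L (w j)]
      rw [List.count_append]
    have htk : (((w j).drop L).take (m - 0)).count a = ((w j).drop L).count a := by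
      rw [Nat.sub_zero, List.take_of_length_le (by rw [List.length_drop]; omega)]
    have hbuf : List.count a [k] = if k = a then 1 else 0 := by
      simp only [List.count_cons, List.count_nil, beq_iff_eq, zero_add]
    have e3 : (if a = k then 1 else 0) = (if k = a then 1 else 0) := by simp [eq_comm]
    rw [hbuf, htk]
    omega

theorem inv_all (n : ℕ) (j k i : Fin n) (d : Fin n → ℕ) (w : Fin n → List (Fin n))
    (L m : ℕ) (b idx : ℕ → Fin n)
    (hinj : ∀ l₁ l₂ : Fin n, (w l₁).length = (w l₂).length → l₁ = l₂)
    (halpha : ∀ l : Fin n, ∀ a ∈ w l, l ≤ a)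
    (hiL : (w i).length = L) (hik : i ≤ k) (hkj : k < j)
    (hU : (w j).length = L + m) (hUn : L + m < n)
    (hb : ∀ t, t < m → b t = ((w j).drop L).getD t k)
    (hidx : ∀ t, t < m → (w (idx t)).length = L + t)
    (hσ : ∃ σ : Equiv.Perm (Fin n), ∀ l, (w l).length = (σ l : ℕ))
    (hcount : ∀ a : Fin n, (∑ x, (w x).count a) + (if a = k then 1 else 0) = d a) :
    ∀ s, s ≤ m → SEInv n j k d w L m s
      (run n j k b idx m (Function.update w j ((w j).take L)) s) := by
  intro s
  induction s with
  | zero => exact fun _ => inv_init n j k d w L m halpha hU hUn hσ hcount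
  | succ s ih =>
    intro hs
    exact inv_step n j k i d w L m b idx hinj halpha hiL hik hkj hU hUn hb hidx s
      (by omega) _ (ih (by omega))

/-- well-definedness of the sign-eliminating map: the output of the
algorithm on any input from `A` satisfies the alphabet constraints, has lengths
forming a permutation of `{0,…,n−1}`, and has a unique deficit letter
`b_1 ∈ {j,…,n}`. -/
theorem stmt14 (n : ℕ) (hn : 2 ≤ n) (j : Fin n) (hj : 1 ≤ (j : ℕ))
    (d : Fin n → ℕ) (hd : ∑ l, d l = n.choose 2 + 1)
    (w : Fin n → List (Fin n)) (i k : Fin n) (h : memA n j d w i k) :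
    (∀ l : Fin n, ∀ a ∈ algOut n j k i w l, l ≤ a) ∧
    (∃ σ : Equiv.Perm (Fin n), ∀ l, (algOut n j k i w l).length = (σ l : ℕ)) ∧
    (∃! b1 : Fin n, j ≤ b1 ∧ ∀ l : Fin n,
      (∑ m, (algOut n j k i w m).count l) + (if l = b1 then 1 else 0) = d l) := by
  obtain ⟨hij, halpha, hσex, hlen, hik, hkj, hcount⟩ := h
  obtain ⟨σ, hσ⟩ := hσex
  have hinj : ∀ l₁ l₂ : Fin n, (w l₁).length = (w l₂).length → l₁ = l₂ := by
    intro l₁ l₂ e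
    rw [hσ l₁, hσ l₂] at e
    exact σ.injective (Fin.val_injective e)
  set L := (w i).length with hL
  set m := (w j).length - L with hmdef
  have hUm : (w j).length = L + m := by omega
  have hm1 : 1 ≤ m := by omega
  have hUn : L + m < n := by
    rw [← hUm, hσ j]; exact (σ j).isLt
  set b : ℕ → Fin n := (fun t => ((w j).drop L).getD t k) with hbdef
  set idx : ℕ → Fin n := (fun t =>
    @Function.invFun (Fin n) ℕ ⟨j⟩ (fun l => (w l).length) (L + t)) with hidxdef
  have hidx : ∀ t, t < m → (w (idx t)).length = L + t := by
    intro t ht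
    have hex : ∃ l, (w l).length = L + t := by
      refine ⟨σ.symm ⟨L + t, by omega⟩, ?_⟩
      rw [hσ]; simp
    exact @Function.invFun_eq _ _ ⟨j⟩ _ _ hex
  have halg : algOut n j k i w
      = (run n j k b idx m (Function.update w j ((w j).take L)) m).1 := rfl
  have HI := inv_all n j k i d w L m b idx hinj halpha hL.symm hik hkj hUm hUn
    (fun t _ => rfl) hidx ⟨σ, hσ⟩ hcount m le_rfl
  obtain ⟨HA, HB, HC, Hv, Hhn, HM, HE⟩ := HI
  -- the last step is a receiver with buffer [b 0]
  have hidx0 : idx 0 = i := hinj _ _ (by rw [hidx 0 (by omega)]; omega)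
  have hsnd : (run n j k b idx m (Function.update w j ((w j).take L)) m).2 = [b 0] := by
    obtain ⟨s', hs'⟩ : ∃ s', m = s' + 1 := ⟨m - 1, by omega⟩
    rw [hs']
    show (stepF n j k b idx (s' + 1 - 1 - s')
      (run n j k b idx (s' + 1) (Function.update w j ((w j).take L)) s')).2 = [b 0]
    rw [show s' + 1 - 1 - s' = 0 from by omega]
    simp only [stepF]
    rw [hidx0]
    split_ifs with h1 h2
    · exact absurd h1 (not_lt.mpr hij.le)
    · exact absurd h2 (not_lt.mpr hik)
    · rfl
  -- facts about b 0
  have hdlen : ((w j).drop L).length = m := by rw [List.length_drop]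
  have hb0mem : b 0 ∈ w j := by
    have h1 : ((w j).drop L)[0]? = some (((w j).drop L).getD 0 k) := by
      rw [List.getElem?_eq_getElem (by omega)]
      simp [List.getD_eq_getElem?_getD, List.getElem?_eq_getElem
        (show 0 < ((w j).drop L).length by omega)]
    exact List.mem_of_mem_drop (List.mem_of_getElem? h1)
  have hjb : j ≤ b 0 := halpha j _ hb0mem
  rw [halg]
  refine ⟨fun l a ha => HC l a ha, ?_, ?_⟩
  · -- lengths form a permutation
    have e0 : L + (m - m)
        + (run n j k b idx m (Function.update w j ((w j).take L)) m).2.length - 1 = L := by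
      rw [hsnd]; simp
    rw [e0] at HM
    have hMM : Multiset.map
        (fun l => ((run n j k b idx m (Function.update w j ((w j).take L)) m).1 l).length)
        Finset.univ.val = Multiset.range n := by
      rw [HM, Multiset.cons_erase (Multiset.mem_range.mpr (by omega))]
    have hlt : ∀ l, ((run n j k b idx m (Function.update w j ((w j).take L)) m).1 l).length < n :=
      fun l => Multiset.mem_range.mp (hMM ▸ Multiset.mem_map_of_mem _ (Finset.mem_univ l))
    set W := (run n j k b idx m (Function.update w j ((w j).take L)) m).1 with hW
    have hfinj : Function.Injective (fun l => (⟨(W l).length, hlt l⟩ : Fin n)) := by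
      intro x y e
      simp only [Fin.mk.injEq] at e
      exact Multiset.inj_on_of_nodup_map (by rw [hMM]; exact Multiset.nodup_range n)
        x (Finset.mem_univ x) y (Finset.mem_univ y) e
    exact ⟨Equiv.ofBijective _ (Finite.injective_iff_bijective.mp hfinj), fun l => rfl⟩
  · -- unique deficit letter
    have hprop : ∀ a : Fin n,
        (∑ x, ((run n j k b idx m (Function.update w j ((w j).take L)) m).1 x).count a)
          + (if a = b 0 then 1 else 0) = d a := by
      intro a
      have h0 := HE a
      rw [hsnd, Nat.sub_self, List.take_zero] at h0
      simp only [List.count_cons, List.count_nil, beq_iff_eq, zero_add, add_zero] at h0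
      have e3 : (if a = b 0 then 1 else 0) = (if b 0 = a then 1 else 0) := by simp [eq_comm]
      omega
    refine ⟨b 0, ⟨hjb, hprop⟩, ?_⟩
    intro b1' ⟨_, hprop'⟩
    have h1 := hprop' (b 0)
    have h2 := hprop (b 0)
    by_cases e : b 0 = b1'
    · exact e.symm
    · rw [if_neg e, add_zero] at h1
      rw [h1, if_pos rfl] at h2
      omega

end
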